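/- Every simple closed loop on the square lattice has at least 4 corners: let k ≥ 3 be a natural number and let f : ZMod k → ℤ × ℤ be an injective map such that for every i, the step f(i + 1) − f(i) lies in {(1,0), (−1,0), (0,1), (0,−1)}. Then there are at least 4 indices i ∈ ZMod k at which the direction changes, i.e. f(i + 1) − f(i) ≠ f(i) − f(i − 1). -/

import Mathlib

/-- Every simple closed loop on the square lattice has at least 4 corners:
if `k ≥ 3` and `f : ZMod k → ℤ × ℤ` is injective with every consecutive step
a unit step, then there are at least 4 indices at which the direction
changes. -/
theorem lattice_loop_four_corners (k : ℕ) (hk : 3 ≤ k) (f : ZMod k → ℤ × ℤ)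
    (hinj : Function.Injective f)
    (hstep : ∀ i : ZMod k,
      f (i + 1) - f i ∈ ({(1, 0), (-1, 0), (0, 1), (0, -1)} : Set (ℤ × ℤ))) :
    4 ≤ {i : ZMod k | f (i + 1) - f i ≠ f i - f (i - 1)}.ncard := by
  haveI : NeZero k := ⟨by omega⟩
  set g : ZMod k → ℤ × ℤ := fun i => f (i + 1) - f i with hg
  have hgmem : ∀ i : ZMod k, g i = (1, 0) ∨ g i = (-1, 0) ∨ g i = (0, 1) ∨ g i = (0, -1) := by
    intro i
    have := hstep i
    simpa only [Set.mem_insert_iff, Set.mem_singleton_iff] using this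
  -- the sum of all steps is zero
  have hsum : ∑ i : ZMod k, g i = 0 := by
    have h1 : ∑ i : ZMod k, f (i + 1) = ∑ i : ZMod k, f i :=
      Fintype.sum_equiv (Equiv.addRight 1) _ _ (fun i => rfl)
    simp [hg, Finset.sum_sub_distrib, h1]
  -- consecutive steps are never opposite
  have hopp : ∀ i : ZMod k, g (i + 1) ≠ -g i := by
    intro i h
    simp only [hg] at h
    have h2 : f (i + 1 + 1) = f i := by
      have h3 : f (i + 1 + 1) - f i = 0 := by linear_combination h
      exact sub_eq_zero.mp h3
    have h4 : i + 1 + 1 = i := hinj h2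
    have h5 : ((2 : ℕ) : ZMod k) = 0 := by push_cast; linear_combination h4
    have := (ZMod.natCast_eq_zero_iff 2 k).mp h5
    have := Nat.le_of_dvd (by norm_num) this
    omega
  -- g is not "locally constant everywhere" (else sum would be k • c ≠ 0)
  have hnc : ¬ (∀ i : ZMod k, g (i + 1) = g i) := by
    intro h
    have hconst : ∀ j : ZMod k, g j = g 0 := by
      have hn : ∀ n : ℕ, g ((n : ZMod k)) = g 0 := by
        intro n
        induction n with
        | zero => simp
        | succ m ih => rw [show ((m + 1 : ℕ) : ZMod k) = (m : ZMod k) + 1 by push_cast; ring,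
            h, ih]
      intro j
      obtain ⟨n, rfl⟩ := ZMod.natCast_rightInverse.surjective j
      exact hn n
    have hks : ∑ i : ZMod k, g i = (k : ℕ) • g 0 := by
      rw [Finset.sum_congr rfl (fun i _ => hconst i)]
      simp
    rw [hsum] at hks
    have hz : g 0 = 0 := by
      rcases smul_eq_zero.mp hks.symm with h' | h'
      · exact absurd h' (by omega)
      · exact h'
    rcases hgmem 0 with h' | h' | h' | h' <;> rw [hz] at h' <;>
      exact absurd h'.symm (by norm_num [Prod.ext_iff])
  -- if all steps are vertical (resp. horizontal), g is locally constant
  have hvd : ∀ j : ZMod k, (g j).1 = 0 → g j = (0, 1) ∨ g j = (0, -1) := by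
    intro j hj
    rcases hgmem j with h' | h' | h' | h' <;> rw [h'] at hj ⊢ <;> (revert hj; norm_num)
  have hhd : ∀ j : ZMod k, (g j).2 = 0 → g j = (1, 0) ∨ g j = (-1, 0) := by
    intro j hj
    rcases hgmem j with h' | h' | h' | h' <;> rw [h'] at hj ⊢ <;> (revert hj; norm_num)
  have hvert : (∀ i : ZMod k, (g i).1 = 0) → ∀ i : ZMod k, g (i + 1) = g i := by
    intro h i
    rcases hvd i (h i) with h1 | h1 <;> rcases hvd (i + 1) (h (i + 1)) with h2 | h2 <;>
      rw [h1, h2] <;> first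
        | rfl
        | (exfalso; apply hopp i; rw [h1, h2]; norm_num [Prod.ext_iff])
  have hhor : (∀ i : ZMod k, (g i).2 = 0) → ∀ i : ZMod k, g (i + 1) = g i := by
    intro h i
    rcases hhd i (h i) with h1 | h1 <;> rcases hhd (i + 1) (h (i + 1)) with h2 | h2 <;>
      rw [h1, h2] <;> first
        | rfl
        | (exfalso; apply hopp i; rw [h1, h2]; norm_num [Prod.ext_iff])
  -- component sums are zero
  have hsum1 : ∑ i : ZMod k, (g i).1 = 0 := by
    rw [← Prod.fst_sum, hsum]; rfl
  have hsum2 : ∑ i : ZMod k, (g i).2 = 0 := by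
    rw [← Prod.snd_sum, hsum]; rfl
  -- every direction appears
  have happ1 : ∃ i : ZMod k, g i = (1, 0) := by
    by_contra hno
    push_neg at hno
    have hle : ∀ i : ZMod k, (g i).1 ≤ 0 := by
      intro i
      rcases hgmem i with h' | h' | h' | h' <;> first
        | (exact absurd h' (hno i)) | (simp [h'])
    have hz : ∀ i : ZMod k, (g i).1 = 0 := by
      intro i
      have := (Finset.sum_eq_zero_iff_of_nonpos (fun j _ => hle j)).mp hsum1
      exact this i (Finset.mem_univ i)
    exact hnc (hvert hz)
  have happ2 : ∃ i : ZMod k, g i = (-1, 0) := by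
    by_contra hno
    push_neg at hno
    have hle : ∀ i : ZMod k, 0 ≤ (g i).1 := by
      intro i
      rcases hgmem i with h' | h' | h' | h' <;> first
        | (exact absurd h' (hno i)) | (simp [h'])
    have hz : ∀ i : ZMod k, (g i).1 = 0 := by
      intro i
      have := (Finset.sum_eq_zero_iff_of_nonneg (fun j _ => hle j)).mp hsum1
      exact this i (Finset.mem_univ i)
    exact hnc (hvert hz)
  have happ3 : ∃ i : ZMod k, g i = (0, 1) := by
    by_contra hno
    push_neg at hno
    have hle : ∀ i : ZMod k, (g i).2 ≤ 0 := by
      intro i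
      rcases hgmem i with h' | h' | h' | h' <;> first
        | (exact absurd h' (hno i)) | (simp [h'])
    have hz : ∀ i : ZMod k, (g i).2 = 0 := by
      intro i
      have := (Finset.sum_eq_zero_iff_of_nonpos (fun j _ => hle j)).mp hsum2
      exact this i (Finset.mem_univ i)
    exact hnc (hhor hz)
  have happ4 : ∃ i : ZMod k, g i = (0, -1) := by
    by_contra hno
    push_neg at hno
    have hle : ∀ i : ZMod k, 0 ≤ (g i).2 := by
      intro i
      rcases hgmem i with h' | h' | h' | h' <;> first
        | (exact absurd h' (hno i)) | (simp [h'])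
    have hz : ∀ i : ZMod k, (g i).2 = 0 := by
      intro i
      have := (Finset.sum_eq_zero_iff_of_nonneg (fun j _ => hle j)).mp hsum2
      exact this i (Finset.mem_univ i)
    exact hnc (hhor hz)
  -- for any direction that appears and is not the only one, find a corner starting it
  have hfind : ∀ d : ℤ × ℤ, (∃ i, g i = d) → (∃ j, g j ≠ d) →
      ∃ m : ZMod k, g m = d ∧ g (m - 1) ≠ d := by
    intro d ⟨i, hi⟩ ⟨j, hj⟩
    by_contra hno
    push_neg at hno
    have hback : ∀ n : ℕ, g (i - (n : ZMod k)) = d := by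
      intro n
      induction n with
      | zero => simpa using hi
      | succ m ih =>
        have h1 := hno _ ih
        rw [show i - (((m + 1 : ℕ)) : ZMod k) = i - (m : ZMod k) - 1 by push_cast; ring]
        exact h1
    apply hj
    obtain ⟨n, hn⟩ := ZMod.natCast_rightInverse.surjective (i - j)
    have : j = i - (n : ZMod k) := by rw [hn]; ring
    rw [this]
    exact hback n
  obtain ⟨a1, ha1⟩ := happ1
  obtain ⟨a3, ha3⟩ := happ3
  obtain ⟨m1, hm1, hm1'⟩ := hfind (1, 0) ⟨a1, ha1⟩
    ⟨a3, by rw [ha3]; norm_num [Prod.ext_iff]⟩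
  obtain ⟨m2, hm2, hm2'⟩ := hfind (-1, 0) happ2
    ⟨a3, by rw [ha3]; norm_num [Prod.ext_iff]⟩
  obtain ⟨m3, hm3, hm3'⟩ := hfind (0, 1) ⟨a3, ha3⟩
    ⟨a1, by rw [ha1]; norm_num [Prod.ext_iff]⟩
  obtain ⟨m4, hm4, hm4'⟩ := hfind (0, -1) happ4
    ⟨a1, by rw [ha1]; norm_num [Prod.ext_iff]⟩
  -- membership in the corner set
  set S : Set (ZMod k) := {i : ZMod k | f (i + 1) - f i ≠ f i - f (i - 1)} with hS
  have hgm1 : ∀ m : ZMod k, g (m - 1) = f m - f (m - 1) := by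
    intro m
    simp only [hg]
    rw [sub_add_cancel]
  have key : ∀ m : ZMod k, g m ≠ g (m - 1) → m ∈ S := by
    intro m hm
    simp only [hS, Set.mem_setOf_eq]
    rw [← hgm1]
    exact hm
  have hc1 : m1 ∈ S := key m1 (by rw [hm1]; exact fun h => hm1' h.symm)
  have hc2 : m2 ∈ S := key m2 (by rw [hm2]; exact fun h => hm2' h.symm)
  have hc3 : m3 ∈ S := key m3 (by rw [hm3]; exact fun h => hm3' h.symm)
  have hc4 : m4 ∈ S := key m4 (by rw [hm4]; exact fun h => hm4' h.symm)
  -- the four corners are distinct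
  have d12 : m1 ≠ m2 := fun h => by rw [h, hm2] at hm1; exact absurd hm1 (by norm_num [Prod.ext_iff])
  have d13 : m1 ≠ m3 := fun h => by rw [h, hm3] at hm1; exact absurd hm1 (by norm_num [Prod.ext_iff])
  have d14 : m1 ≠ m4 := fun h => by rw [h, hm4] at hm1; exact absurd hm1 (by norm_num [Prod.ext_iff])
  have d23 : m2 ≠ m3 := fun h => by rw [h, hm3] at hm2; exact absurd hm2 (by norm_num [Prod.ext_iff])
  have d24 : m2 ≠ m4 := fun h => by rw [h, hm4] at hm2; exact absurd hm2 (by norm_num [Prod.ext_iff])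
  have d34 : m3 ≠ m4 := fun h => by rw [h, hm4] at hm3; exact absurd hm3 (by norm_num [Prod.ext_iff])
  have hcard : ({m1, m2, m3, m4} : Finset (ZMod k)).card = 4 := by
    rw [Finset.card_insert_of_notMem (by simp [d12, d13, d14]),
        Finset.card_insert_of_notMem (by simp [d23, d24]),
        Finset.card_insert_of_notMem (by simp [d34]),
        Finset.card_singleton]
  calc (4 : ℕ) = ({m1, m2, m3, m4} : Finset (ZMod k)).card := hcard.symm
    _ = (({m1, m2, m3, m4} : Finset (ZMod k)) : Set (ZMod k)).ncard :=
        (Set.ncard_coe_finset _).symm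
    _ ≤ S.ncard := by
        apply Set.ncard_le_ncard _ (Set.toFinite S)
        intro x hx
        simp only [Finset.coe_insert, Finset.coe_singleton, Set.mem_insert_iff,
          Set.mem_singleton_iff] at hx
        rcases hx with rfl | rfl | rfl | rfl
        · exact hc1
        · exact hc2
        · exact hc3
        · exact hc4
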